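/- arXiv:1703.08434 — 2 statements merged into one kernel-verified Lean document; each statement's English description precedes it below -/
import Mathlib

section
/- Let μ₁, μ₂, σ₁, σ₂ be real numbers with σ₁ > 0, σ₂ > 0, σ₁ ≠ σ₂, and let τ > 0. Define β = sqrt((μ₁−μ₂)² + 2(σ₁²−σ₂²)·ln(τσ₁/σ₂)) and assume the quantity under the square root is positive. Let w₀⁺ = (μ₂σ₁² − μ₁σ₂² + σ₁σ₂β)/(σ₁²−σ₂²) and w₀⁻ = (μ₂σ₁² − μ₁σ₂² − σ₁σ₂β)/(σ₁²−σ₂²). Define z₁(w) = (w−μ₁)/σ₁ and z₂(w) = (w−μ₂)/σ₂. Then z₂(w₀⁻)/σ₂ ≥ z₁(w₀⁻)/σ₁ implies False; i.e., w₀⁻ does not satisfy the inequality z₂/σ₂ ≥ z₁/σ₁. -/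
theorem stmt_0 (μ₁ μ₂ σ₁ σ₂ τ : ℝ) (hσ₁ : 0 < σ₁) (hσ₂ : 0 < σ₂) (hne : σ₁ ≠ σ₂)
    (hτ : 0 < τ)
    (hΔ : 0 < (μ₁ - μ₂)^2 + 2 * (σ₁^2 - σ₂^2) * Real.log (τ * σ₁ / σ₂))
    (β : ℝ) (hβ : β = Real.sqrt ((μ₁ - μ₂)^2 + 2 * (σ₁^2 - σ₂^2) * Real.log (τ * σ₁ / σ₂)))
    (w₀minus : ℝ)
    (hw : w₀minus = (μ₂ * σ₁^2 - μ₁ * σ₂^2 - σ₁ * σ₂ * β) / (σ₁^2 - σ₂^2))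
    (h : ((w₀minus - μ₂) / σ₂) / σ₂ ≥ ((w₀minus - μ₁) / σ₁) / σ₁) : False := by
  have hβpos : 0 < β := hβ ▸ Real.sqrt_pos.mpr hΔ
  have hd : σ₁^2 - σ₂^2 ≠ 0 := by
    intro hz
    apply hne
    nlinarith
  have key : ((w₀minus - μ₂) / σ₂) / σ₂ - ((w₀minus - μ₁) / σ₁) / σ₁ = -β / (σ₁ * σ₂) := by
    rw [hw]
    field_simp
    ring
  have : -β / (σ₁ * σ₂) < 0 := by
    apply div_neg_of_neg_of_pos <;> nlinarith
  linarith [key ▸ sub_nonneg.mpr h]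
end

section
/- Let μ₁, μ₂, σ₁, σ₂ be real numbers with σ₁ > 0, σ₂ > 0, σ₁ ≠ σ₂, and τ > 0. Suppose Δ := (μ₁−μ₂)² + 2(σ₁²−σ₂²)·ln(τσ₁/σ₂) > 0 and let β = sqrt(Δ). Then w₀⁺ = (μ₂σ₁² − μ₁σ₂² + σ₁σ₂β)/(σ₁²−σ₂²) satisfies the inequality (w₀⁺−μ₂)/σ₂² ≥ (w₀⁺−μ₁)/σ₁², i.e., z₂/σ₂ ≥ z₁/σ₁ where z₁ = (w₀⁺−μ₁)/σ₁ and z₂ = (w₀⁺−μ₂)/σ₂. -/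
theorem stmt_1 (μ₁ μ₂ σ₁ σ₂ τ : ℝ) (hσ₁ : 0 < σ₁) (hσ₂ : 0 < σ₂) (hne : σ₁ ≠ σ₂)
    (hτ : 0 < τ)
    (hΔ : 0 < (μ₁ - μ₂)^2 + 2 * (σ₁^2 - σ₂^2) * Real.log (τ * σ₁ / σ₂))
    (β : ℝ) (hβ : β = Real.sqrt ((μ₁ - μ₂)^2 + 2 * (σ₁^2 - σ₂^2) * Real.log (τ * σ₁ / σ₂)))
    (w₀plus : ℝ)
    (hw : w₀plus = (μ₂ * σ₁^2 - μ₁ * σ₂^2 + σ₁ * σ₂ * β) / (σ₁^2 - σ₂^2)) :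
    ((w₀plus - μ₂) / σ₂) / σ₂ ≥ ((w₀plus - μ₁) / σ₁) / σ₁ := by
  have hβ0 : 0 ≤ β := hβ ▸ Real.sqrt_nonneg _
  have hD : σ₁^2 - σ₂^2 ≠ 0 := by
    have h1 : σ₁ - σ₂ ≠ 0 := sub_ne_zero.mpr hne
    have h2 : σ₁ + σ₂ ≠ 0 := by positivity
    have : σ₁^2 - σ₂^2 = (σ₁ - σ₂) * (σ₁ + σ₂) := by ring
    rw [this]; exact mul_ne_zero h1 h2
  rw [ge_iff_le, ← sub_nonneg]
  have key : ((w₀plus - μ₂) / σ₂) / σ₂ - ((w₀plus - μ₁) / σ₁) / σ₁ = β / (σ₁ * σ₂) := by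
    subst hw
    field_simp
    ring
  rw [key]
  positivity
end
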